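/- Let A be an n×n Metzler matrix. If there exists a vector λ ∈ ℝ^n with all entries strictly positive such that every entry of the row vector λᵀA is strictly negative, then A is Hurwitz stable, i.e., every eigenvalue of A has strictly negative real part. -/

import Mathlib

open Matrix NormedSpace

/-- A Metzler matrix admitting a strictly positive vector `l` with `lᵀA < 0` componentwise
is Hurwitz stable. -/
theorem metzler_copositive_hurwitz (n : ℕ) (A : Matrix (Fin n) (Fin n) ℝ)
    (hA : ∀ i j, i ≠ j → 0 ≤ A i j)
    (h : ∃ l : Fin n → ℝ, (∀ i, 0 < l i) ∧ ∀ j, Matrix.vecMul l A j < 0) :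
    ∀ μ ∈ spectrum ℂ (A.map (algebraMap ℝ ℂ)), μ.re < 0 := by
  obtain ⟨l, hl, hlA⟩ := h
  intro μ hμ
  set M := A.map (algebraMap ℝ ℂ) with hM
  -- extract an eigenvector
  rw [spectrum.mem_iff] at hμ
  have hdet : (algebraMap ℂ (Matrix (Fin n) (Fin n) ℂ) μ - M).det = 0 := by
    by_contra hd
    exact hμ ((Matrix.isUnit_iff_isUnit_det _).mpr (isUnit_iff_ne_zero.mpr hd))
  obtain ⟨v, hv0, hv⟩ := (Matrix.exists_mulVec_eq_zero_iff).mpr hdet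
  rw [sub_mulVec] at hv
  have h2 : (algebraMap ℂ (Matrix (Fin n) (Fin n) ℂ) μ).mulVec v = μ • v := by
    ext i; simp [Matrix.algebraMap_eq_diagonal, mulVec_diagonal]
  rw [h2, sub_eq_zero] at hv
  -- eigenvalue equation componentwise
  have heig : ∀ i, μ * v i = ∑ j, (A i j : ℂ) * v j := by
    intro i
    have := congrFun hv i
    simpa [Matrix.mulVec, dotProduct, hM, Matrix.map_apply] using this
  -- key pointwise inequality : μ.re * ‖v i‖ ≤ ∑ j, A i j * ‖v j‖
  have key : ∀ i, μ.re * ‖v i‖ ≤ ∑ j, A i j * ‖v j‖ := by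
    intro i
    have h1 : (μ - (A i i : ℂ)) * v i = ∑ j ∈ Finset.univ.erase i, (A i j : ℂ) * v j := by
      rw [Finset.sum_erase_eq_sub (Finset.mem_univ i), ← heig i]
      ring
    have h3 : ‖(μ - (A i i : ℂ)) * v i‖
        ≤ ∑ j ∈ Finset.univ.erase i, A i j * ‖v j‖ := by
      rw [h1]
      refine (norm_sum_le _ _).trans_eq ?_
      refine Finset.sum_congr rfl fun j hj => ?_
      rw [norm_mul, Complex.norm_real, Real.norm_eq_abs,
        abs_of_nonneg (hA i j (Finset.ne_of_mem_erase hj).symm)]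
    have h4 : (μ.re - A i i) * ‖v i‖
        ≤ ‖(μ - (A i i : ℂ)) * v i‖ := by
      rw [norm_mul]
      refine mul_le_mul_of_nonneg_right ?_ (norm_nonneg _)
      calc μ.re - A i i = (μ - (A i i : ℂ)).re := by simp
        _ ≤ ‖μ - (A i i : ℂ)‖ := Complex.re_le_norm _
    have := h4.trans h3
    have h5 : ∑ j, A i j * ‖v j‖
        = A i i * ‖v i‖ + ∑ j ∈ Finset.univ.erase i, A i j * ‖v j‖ := by
      exact (Finset.add_sum_erase _ _ (Finset.mem_univ i)).symm
    rw [h5]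
    nlinarith [this]
  -- sum with weights l
  have hS : 0 < ∑ i, l i * ‖v i‖ := by
    have hne : ∃ i, v i ≠ 0 := by
      by_contra hc
      push_neg at hc
      exact hv0 (funext hc)
    obtain ⟨i0, hi0⟩ := hne
    refine Finset.sum_pos' (fun i _ => mul_nonneg (hl i).le (norm_nonneg _)) ?_
    exact ⟨i0, Finset.mem_univ i0, mul_pos (hl i0) (norm_pos_iff.mpr hi0)⟩
  have hT : ∑ j, Matrix.vecMul l A j * ‖v j‖ < 0 := by
    have hne : ∃ i, v i ≠ 0 := by
      by_contra hc
      push_neg at hc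
      exact hv0 (funext hc)
    obtain ⟨i0, hi0⟩ := hne
    have : ∀ j ∈ Finset.univ, Matrix.vecMul l A j * ‖v j‖ ≤ 0 := fun j _ =>
      mul_nonpos_of_nonpos_of_nonneg (hlA j).le (norm_nonneg _)
    have hlt : ∑ j, Matrix.vecMul l A j * ‖v j‖ < ∑ _j : Fin n, (0:ℝ) :=
      Finset.sum_lt_sum this ⟨i0, Finset.mem_univ i0,
        mul_neg_of_neg_of_pos (hlA i0) (norm_pos_iff.mpr hi0)⟩
    simpa using hlt
  have hmain : μ.re * ∑ i, l i * ‖v i‖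
      ≤ ∑ j, Matrix.vecMul l A j * ‖v j‖ := by
    calc μ.re * ∑ i, l i * ‖v i‖
        = ∑ i, l i * (μ.re * ‖v i‖) := by
          rw [Finset.mul_sum]; congr 1; ext i; ring
      _ ≤ ∑ i, l i * ∑ j, A i j * ‖v j‖ :=
          Finset.sum_le_sum fun i _ => mul_le_mul_of_nonneg_left (key i) (hl i).le
      _ = ∑ j, Matrix.vecMul l A j * ‖v j‖ := by
          simp_rw [Matrix.vecMul, dotProduct, Finset.mul_sum, Finset.sum_mul, mul_assoc]
          rw [Finset.sum_comm]
  nlinarith [hmain.trans_lt hT, hS]
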